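/- Let m be an odd cube-free positive integer, i.e., m is odd and no prime cube divides m. If G is a finite group of order 2m, then G has a basis. -/

import Mathlib

/-- A sequence `b : Fin n → G` of non-identity elements is a *basis* for the group `G`
if every `g ∈ G` is uniquely of the form `b 0 ^ a 0 * ⋯ * b (n-1) ^ a (n-1)`
with `a i ∈ {0, …, orderOf (b i) - 1}`. -/
def IsGroupBasis {G : Type*} [Group G] {n : ℕ} (b : Fin n → G) : Prop :=
  (∀ i, b i ≠ 1) ∧
    Function.Bijective (fun a : ∀ i, Fin (orderOf (b i)) =>
      (List.ofFn fun i => b i ^ ((a i : ℕ))).prod)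

/-- `G` has a basis. -/
def HasGroupBasis (G : Type*) [Group G] : Prop :=
  ∃ (n : ℕ) (b : Fin n → G), IsGroupBasis b

theorem hasGroupBasis_of_subsingleton (G : Type*) [Group G] [Subsingleton G] :
    HasGroupBasis G := by
  refine ⟨0, ![], fun i => i.elim0, ?_⟩
  constructor
  · intro a b _; funext i; exact i.elim0
  · intro g; exact ⟨fun i => i.elim0, Subsingleton.elim _ _⟩

theorem hasGroupBasis_of_isComplement' {G : Type*} [Group G] {H K : Subgroup G}
    (hc : H.IsComplement' K) (hH : HasGroupBasis H) (hK : HasGroupBasis K) :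
    HasGroupBasis G := by
  obtain ⟨n, b, hb1, hb2⟩ := hH
  obtain ⟨m, c, hc1, hc2⟩ := hK
  set d : Fin (n + m) → G := Fin.append (fun i => (b i : G)) (fun j => (c j : G)) with hd
  have h₁ : ∀ i : Fin n, orderOf (d (Fin.castAdd m i)) = orderOf (b i) := by
    intro i; rw [hd, Fin.append_left]; exact Subgroup.orderOf_coe _
  have h₂ : ∀ j : Fin m, orderOf (d (Fin.natAdd n j)) = orderOf (c j) := by
    intro j; rw [hd, Fin.append_right]; exact Subgroup.orderOf_coe _
  refine ⟨n + m, d, ?_, ?_⟩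
  · intro i
    refine Fin.addCases (motive := fun i => d i ≠ 1) ?_ ?_ i
    · intro i h
      rw [hd, Fin.append_left] at h
      exact hb1 i (Subtype.ext h)
    · intro j h
      rw [hd, Fin.append_right] at h
      exact hc1 j (Subtype.ext h)
  · set E : ((∀ i : Fin n, Fin (orderOf (b i))) × (∀ j : Fin m, Fin (orderOf (c j)))) →
        (∀ i : Fin (n + m), Fin (orderOf (d i))) :=
      fun x i => Fin.addCases (motive := fun i => Fin (orderOf (d i)))
        (fun i => Fin.cast (h₁ i).symm (x.1 i)) (fun j => Fin.cast (h₂ j).symm (x.2 j)) i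
      with hE
    have hEbij : Function.Bijective E := by
      constructor
      · intro x y hxy
        have l1 : ∀ i : Fin n, E x (Fin.castAdd m i) = E y (Fin.castAdd m i) := fun i => by
          rw [hxy]
        have l2 : ∀ j : Fin m, E x (Fin.natAdd n j) = E y (Fin.natAdd n j) := fun j => by
          rw [hxy]
        ext1
        · funext i
          have := l1 i
          simpa [hE, Fin.ext_iff] using this
        · funext j
          have := l2 j
          simpa [hE, Fin.ext_iff] using this
      · intro a
        refine ⟨⟨fun i => Fin.cast (h₁ i) (a (Fin.castAdd m i)),
          fun j => Fin.cast (h₂ j) (a (Fin.natAdd n j))⟩, ?_⟩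
        funext i
        refine Fin.addCases (motive := fun i => E _ i = a i) ?_ ?_ i <;> intro i <;>
          simp [hE, Fin.ext_iff]
    have key : ∀ x, (List.ofFn fun i => d i ^ ((E x i : ℕ))).prod =
        ((List.ofFn fun i => b i ^ ((x.1 i : ℕ))).prod : H) *
          ((List.ofFn fun j => c j ^ ((x.2 j : ℕ))).prod : K) := by
      intro x
      have : (fun i => d i ^ ((E x i : ℕ))) =
          Fin.append (fun i => ((b i : G)) ^ ((x.1 i : ℕ))) (fun j => ((c j : G)) ^ ((x.2 j : ℕ))) := by
        funext i
        refine Fin.addCases (motive := fun i => d i ^ ((E x i : ℕ)) = Fin.append _ _ i) ?_ ?_ i <;>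
          intro i <;> simp [hE, hd, Fin.append_left, Fin.append_right]
      rw [this, List.ofFn_fin_append, List.prod_append]
      congr 1
      · rw [SubmonoidClass.coe_list_prod, List.map_ofFn]
        simp [Function.comp_def]
      · rw [SubmonoidClass.coe_list_prod, List.map_ofFn]
        simp [Function.comp_def]
    have : (fun a : ∀ i, Fin (orderOf (d i)) => (List.ofFn fun i => d i ^ ((a i : ℕ))).prod) ∘ E =
        (fun p : H × K => (p.1 : G) * (p.2 : G)) ∘
          (Prod.map (fun a => (List.ofFn fun i => b i ^ ((a i : ℕ))).prod)
            (fun a => (List.ofFn fun j => c j ^ ((a j : ℕ))).prod)) := by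
      funext x; exact key x
    have hcomp : Function.Bijective ((fun a : ∀ i, Fin (orderOf (d i)) =>
        (List.ofFn fun i => d i ^ ((a i : ℕ))).prod) ∘ E) := by
      rw [this]
      exact hc.comp (hb2.prodMap hc2)
    exact (Function.Bijective.of_comp_iff _ hEbij).mp hcomp


theorem hasGroupBasis_single {G : Type*} [Group G] [Finite G] (g : G) (hg1 : g ≠ 1)
    (hgen : ∀ x : G, x ∈ Subgroup.zpowers g) : HasGroupBasis G := by
  refine ⟨1, ![g], fun i => by fin_cases i; simpa, ?_⟩
  have hfin : IsOfFinOrder g := isOfFinOrder_of_finite g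
  constructor
  · intro a a' h
    simp only [List.ofFn_succ, List.ofFn_zero, List.prod_cons, List.prod_nil, mul_one,
      Matrix.cons_val_zero] at h
    have := pow_injOn_Iio_orderOf (x := g) (a 0).2 (a' 0).2 h
    funext i
    fin_cases i
    exact Fin.ext this
  · intro x
    obtain ⟨k, hk⟩ := hgen x
    obtain ⟨n, hn, hgn⟩ : ∃ n : ℕ, n < orderOf g ∧ g ^ n = x := by
      refine ⟨(k % orderOf g).toNat, ?_, ?_⟩
      · have hpos : 0 < (orderOf g : ℤ) := by exact_mod_cast hfin.orderOf_pos
        have := Int.emod_lt_of_pos k hpos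
        have := Int.emod_nonneg k (by omega : (orderOf g : ℤ) ≠ 0)
        omega
      · have hpos : 0 < (orderOf g : ℤ) := by exact_mod_cast hfin.orderOf_pos
        have h1 : g ^ ((k % (orderOf g : ℤ)).toNat : ℤ) = g ^ k := by
          rw [Int.toNat_of_nonneg (Int.emod_nonneg _ (by omega))]
          exact zpow_mod_orderOf g k
        rw [← zpow_natCast, h1]
        exact hk
    refine ⟨fun i => ⟨n, by rw [Fin.eq_zero i]; simpa using hn⟩, ?_⟩
    simpa using hgn

theorem hasGroupBasis_of_isCyclic (G : Type*) [Group G] [Finite G] [IsCyclic G] :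
    HasGroupBasis G := by
  rcases subsingleton_or_nontrivial G with h | h
  · exact hasGroupBasis_of_subsingleton G
  obtain ⟨g, hg⟩ := IsCyclic.exists_generator (α := G)
  have hg1 : g ≠ 1 := by
    rintro rfl
    obtain ⟨x, hx⟩ := exists_ne (1 : G)
    obtain ⟨k, hk⟩ := hg x
    exact hx (by simpa using hk.symm)
  exact hasGroupBasis_single g hg1 hg

theorem hasGroupBasis_zpowers {G : Type*} [Group G] [Finite G] (x : G) (hx : x ≠ 1) :
    HasGroupBasis (Subgroup.zpowers x) := by
  refine hasGroupBasis_single ⟨x, Subgroup.mem_zpowers x⟩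
    (by simp [Subtype.ext_iff, hx]) ?_
  rintro ⟨y, k, rfl⟩
  exact ⟨k, by ext; simp⟩

theorem hasGroupBasis_of_card_dvd_prime_sq {G : Type*} [Group G] [Finite G] {p : ℕ}
    (hp : p.Prime) (h : Nat.card G ∣ p ^ 2) : HasGroupBasis G := by
  have : Fact p.Prime := ⟨hp⟩
  obtain ⟨k, hk2, hcard⟩ := (Nat.dvd_prime_pow hp).mp h
  interval_cases k
  · have h1 : Nat.card G = 1 := by simpa using hcard
    have : Subsingleton G := (Nat.card_eq_one_iff_unique.mp h1).1
    exact hasGroupBasis_of_subsingleton G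
  · have : IsCyclic G := isCyclic_of_prime_card (by simpa using hcard)
    exact hasGroupBasis_of_isCyclic G
  · by_cases hcyc : IsCyclic G
    · exact hasGroupBasis_of_isCyclic G
    have hord : ∀ x : G, x ≠ 1 → orderOf x = p := by
      intro x hx
      have hdvd : orderOf x ∣ p ^ 2 := hcard ▸ orderOf_dvd_natCard x
      obtain ⟨j, hj2, hjo⟩ := (Nat.dvd_prime_pow hp).mp hdvd
      interval_cases j
      · rw [pow_zero] at hjo
        exact absurd (orderOf_eq_one_iff.mp hjo) hx
      · simpa using hjo
      · exfalso
        apply hcyc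
        have htop : Subgroup.zpowers x = ⊤ := Subgroup.eq_top_of_card_eq _ (by
          rw [Nat.card_zpowers, hjo, hcard])
        exact ⟨x, fun y => by
          have : y ∈ Subgroup.zpowers x := by rw [htop]; exact Subgroup.mem_top y
          exact this⟩
    have : Nontrivial G := by
      rw [← Finite.one_lt_card_iff_nontrivial, hcard]
      nlinarith [hp.two_le]
    obtain ⟨x, hx⟩ := exists_ne (1 : G)
    obtain ⟨y, hy⟩ : ∃ y : G, y ∉ Subgroup.zpowers x := by
      by_contra hcon
      push_neg at hcon
      exact hcyc ⟨x, hcon⟩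
    have hy1 : y ≠ 1 := fun h => hy (h ▸ (Subgroup.zpowers x).one_mem)
    have hdisj : Disjoint (Subgroup.zpowers x) (Subgroup.zpowers y) := by
      rw [Subgroup.disjoint_def]
      intro z hzx hzy
      by_contra hz1
      have h1 : Subgroup.zpowers z = Subgroup.zpowers x :=
        Subgroup.eq_of_le_of_card_ge ((Subgroup.zpowers_le).mpr hzx)
          (by rw [Nat.card_zpowers, Nat.card_zpowers, hord x hx, hord z hz1])
      have h2 : Subgroup.zpowers z = Subgroup.zpowers y :=
        Subgroup.eq_of_le_of_card_ge ((Subgroup.zpowers_le).mpr hzy)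
          (by rw [Nat.card_zpowers, Nat.card_zpowers, hord y hy1, hord z hz1])
      exact hy (h1 ▸ h2 ▸ Subgroup.mem_zpowers y)
    have hcompl : (Subgroup.zpowers x).IsComplement' (Subgroup.zpowers y) :=
      Subgroup.isComplement'_of_card_mul_and_disjoint (by
        rw [Nat.card_zpowers, Nat.card_zpowers, hord x hx, hord y hy1, hcard, sq]) hdisj
    exact hasGroupBasis_of_isComplement' hcompl (hasGroupBasis_zpowers x hx)
      (hasGroupBasis_zpowers y hy1)

theorem isCommutative_of_card_dvd_prime_sq {G : Type*} [Group G] {p : ℕ} (hp : p.Prime)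
    (H : Subgroup G) [Finite H] (h : Nat.card H ∣ p ^ 2) : IsMulCommutative H := by
  have : Fact p.Prime := ⟨hp⟩
  obtain ⟨k, hk2, hcard⟩ := (Nat.dvd_prime_pow hp).mp h
  refine ⟨⟨fun a b => ?_⟩⟩
  interval_cases k
  · have : Subsingleton ↥H := (Nat.card_eq_one_iff_unique.mp (by simpa using hcard)).1
    exact Subsingleton.elim _ _
  · have : IsCyclic ↥H := isCyclic_of_prime_card (by simpa using hcard)
    exact (IsCyclic.commGroup).mul_comm a b
  · exact IsPGroup.commutative_of_card_eq_prime_sq hcard a b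

/-- Key numeric/fixed-point lemma: no automorphism of prime order `q > p` on a group of
order `p ^ k`, `k ≤ 2` (where `p`, `q` odd, unless `k ≤ 1`). -/
theorem no_large_prime_aut {P : Type*} [Group P] [Finite P] {p q k : ℕ} (hp : p.Prime)
    (hq : q.Prime) (hcard : Nat.card P = p ^ k) (hk : k ≤ 2) (hqp : p < q)
    (hodd : (Odd p ∧ Odd q) ∨ k ≤ 1) (σ : MulAut P) (hσ : orderOf σ = q) : False := by
  have : Fact q.Prime := ⟨hq⟩
  set S := Subgroup.zpowers σ with hSdef
  have hS : IsPGroup q S := IsPGroup.of_card (n := 1) (by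
    rw [Nat.card_zpowers, hσ, pow_one])
  have hmod := hS.card_modEq_card_fixedPoints P
  set F : Subgroup P := MonoidHom.eqLocus (σ : P →* P) (MonoidHom.id P) with hF
  have hfixmem : ∀ x : P, x ∈ MulAction.fixedPoints S P ↔ σ x = x := by
    intro x
    rw [MulAction.mem_fixedPoints]
    constructor
    · intro hx
      exact hx ⟨σ, Subgroup.mem_zpowers σ⟩
    · intro hx s
      have hle : S ≤ MulAction.stabilizer (MulAut P) x :=
        Subgroup.zpowers_le.mpr (by simpa [MulAction.mem_stabilizer_iff] using hx)
      have hmem := hle s.2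
      rw [MulAction.mem_stabilizer_iff] at hmem
      exact hmem
  have hfixset : MulAction.fixedPoints S P = (F : Set P) := by
    ext x
    rw [hfixmem x]
    rfl
  have hFcard : Nat.card (MulAction.fixedPoints S P) = Nat.card F :=
    Nat.card_congr (Equiv.setCongr hfixset)
  rw [hFcard, hcard] at hmod
  obtain ⟨j, hjk, hFc⟩ := (Nat.dvd_prime_pow hp).mp
    (hcard ▸ Subgroup.card_subgroup_dvd_card F)
  rw [hFc] at hmod
  have hσ1 : σ ≠ 1 := by
    intro h1
    rw [h1, orderOf_one] at hσ
    exact hq.one_lt.ne' hσ.symm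
  have hFne : F ≠ ⊤ := by
    intro htop
    apply hσ1
    ext x
    have : x ∈ F := htop ▸ Subgroup.mem_top x
    exact this
  have hjklt : j < k := by
    rcases lt_or_eq_of_le hjk with h | h
    · exact h
    · exfalso
      apply hFne
      apply Subgroup.eq_top_of_card_eq
      rw [hFc, hcard, h]
  have hdvd1 : q ∣ p ^ k - p ^ j :=
    (Nat.modEq_iff_dvd' (Nat.pow_le_pow_right hp.pos hjk)).mp hmod.symm
  have hsplit : p ^ k - p ^ j = p ^ j * (p ^ (k - j) - 1) := by
    rw [Nat.mul_sub, mul_one, ← pow_add, Nat.add_sub_cancel' hjk]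
  rw [hsplit] at hdvd1
  have hqnotp : ¬ q ∣ p ^ j := by
    intro hdv
    have h2 := Nat.Prime.dvd_of_dvd_pow hq hdv
    have := (Nat.prime_dvd_prime_iff_eq hq hp).mp h2
    omega
  have hdvd2 : q ∣ p ^ (k - j) - 1 := ((Nat.Prime.dvd_mul hq).mp hdvd1).resolve_left hqnotp
  have hple : 2 ≤ p := hp.two_le
  have hd12 : k - j = 1 ∨ k - j = 2 := by omega
  rcases hd12 with h | h
  · rw [h, pow_one] at hdvd2
    have := Nat.le_of_dvd (by omega) hdvd2
    omega
  · have hodd' : Odd p ∧ Odd q := by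
      rcases hodd with h' | h'
      · exact h'
      · omega
    obtain ⟨a, rfl⟩ : ∃ a, p = a + 1 := ⟨p - 1, by omega⟩
    rw [h] at hdvd2
    have hfact : (a + 1) ^ 2 - 1 = a * (a + 2) := by
      have : (a + 1) ^ 2 = a * (a + 2) + 1 := by ring
      omega
    rw [hfact] at hdvd2
    rcases (Nat.Prime.dvd_mul hq).mp hdvd2 with h' | h'
    · have := Nat.le_of_dvd (by omega) h'
      omega
    · have hle := Nat.le_of_dvd (by omega) h'
      have hqeq : q = a + 2 := by omega
      obtain ⟨s, hs⟩ := hodd'.1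
      obtain ⟨t, ht⟩ := hodd'.2
      omega

theorem hasGroupBasis_aux (N : ℕ) : ∀ (G : Type u) [Group G] [Finite G],
    Nat.card G ≤ N → ¬ (2 ^ 2 ∣ Nat.card G) →
    (∀ r : ℕ, r.Prime → ¬ r ^ 3 ∣ Nat.card G) → HasGroupBasis G := by
  induction N with
  | zero =>
    intro G _ _ hle _ _
    have : 0 < Nat.card G := Nat.card_pos
    omega
  | succ N ih =>
    intro G _ _ hle h4 hcf
    rcases subsingleton_or_nontrivial G with hs | hn
    · exact hasGroupBasis_of_subsingleton G
    have hn1 : 1 < Nat.card G := Finite.one_lt_card_iff_nontrivial.mpr hn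
    set n := Nat.card G with hndef
    set p := n.minFac with hpdef
    have hp : p.Prime := Nat.minFac_prime (by omega)
    haveI hfp : Fact p.Prime := ⟨hp⟩
    obtain ⟨P⟩ : Nonempty (Sylow p G) := Sylow.nonempty
    set k := n.factorization p with hkdef
    have hPcard : Nat.card (P : Subgroup G) = p ^ k := P.card_eq_multiplicity
    have hpk1 : ¬ p ^ (k + 1) ∣ n := Nat.pow_succ_factorization_not_dvd (by omega) hp
    have hk1 : 1 ≤ k := by
      by_contra hk0
      push_neg at hk0
      have hpd : p ∣ n := Nat.minFac_dvd n
      have : k = 0 := by omega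
      rw [this] at hpk1
      simp at hpk1
      exact hpk1 hpd
    have hk2 : k ≤ 2 := by
      by_contra h
      exact hcf p hp (dvd_trans (pow_dvd_pow p (by omega)) (Nat.ordProj_dvd n p))
    have hk2' : p = 2 → k ≤ 1 := by
      intro h2
      by_contra h
      apply h4
      rw [← h2]
      exact dvd_trans (pow_dvd_pow p (by omega)) (Nat.ordProj_dvd n p)
    have hPd : Nat.card (P : Subgroup G) ∣ p ^ 2 := hPcard ▸ pow_dvd_pow p hk2
    haveI hcomm : IsMulCommutative (P : Subgroup G) :=
      isCommutative_of_card_dvd_prime_sq hp _ hPd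
    set f := Subgroup.normalizerMonoidHom (P : Subgroup G) with hfdef
    have hNdvd : Nat.card (Subgroup.normalizer ((P : Subgroup G) : Set G)) ∣ n :=
      Subgroup.card_subgroup_dvd_card _
    have hQR : Nat.card (Subgroup.normalizer ((P : Subgroup G) : Set G) ⧸ f.ker) = Nat.card f.range :=
      Nat.card_congr (QuotientGroup.quotientKerEquivRange f).toEquiv
    have hNeq : Nat.card (Subgroup.normalizer ((P : Subgroup G) : Set G)) = Nat.card f.range * Nat.card f.ker := by
      rw [← hQR]
      exact Subgroup.card_eq_card_quotient_mul_card_subgroup f.ker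
    have hRdvd : Nat.card f.range ∣ n := (Dvd.intro _ hNeq.symm).trans hNdvd
    have hPle : (P : Subgroup G).subgroupOf (Subgroup.normalizer ((P : Subgroup G) : Set G)) ≤ f.ker := by
      intro x hx
      rw [Subgroup.normalizerMonoidHom_ker, Subgroup.mem_subgroupOf]
      exact Subgroup.le_centralizer _ ((Subgroup.mem_subgroupOf).mp hx)
    have hPker : (p : ℕ) ^ k ∣ Nat.card f.ker := by
      have h1 : Nat.card ((P : Subgroup G).subgroupOf (Subgroup.normalizer ((P : Subgroup G) : Set G)))
          = p ^ k := by
        rw [← hPcard]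
        exact Nat.card_congr (Subgroup.subgroupOfEquivOfLe Subgroup.le_normalizer).toEquiv
      exact h1 ▸ Subgroup.card_dvd_of_le hPle
    have hpnR : ¬ p ∣ Nat.card f.range := by
      intro hdvd
      apply hpk1
      calc p ^ (k + 1) = p * p ^ k := by ring
      _ ∣ Nat.card f.range * Nat.card f.ker := mul_dvd_mul hdvd hPker
      _ = Nat.card (Subgroup.normalizer ((P : Subgroup G) : Set G)) := hNeq.symm
      _ ∣ n := hNdvd
    have hR1 : Nat.card f.range = 1 := by
      by_contra h1
      obtain ⟨q, hqprime, hqR⟩ : ∃ q, q.Prime ∧ q ∣ Nat.card f.range :=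
        ⟨(Nat.card f.range).minFac, Nat.minFac_prime h1, Nat.minFac_dvd _⟩
      haveI : Fact q.Prime := ⟨hqprime⟩
      have hqn : q ∣ n := hqR.trans hRdvd
      have hpq : p ≤ q := Nat.minFac_le_of_dvd hqprime.two_le hqn
      have hpltq : p < q := by
        rcases lt_or_eq_of_le hpq with h | h
        · exact h
        · exact absurd (h ▸ hqR : p ∣ Nat.card f.range) hpnR
      haveI := Fintype.ofFinite (↥f.range)
      obtain ⟨σ', hσ'⟩ := exists_prime_orderOf_dvd_card (G := ↥f.range) q
        (by rw [← Nat.card_eq_fintype_card]; exact hqR)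
      have hσ : orderOf (σ' : MulAut (P : Subgroup G)) = q :=
        (Subgroup.orderOf_coe σ').trans hσ'
      have hoddhyp : (Odd p ∧ Odd q) ∨ k ≤ 1 := by
        by_cases hp2 : p = 2
        · exact Or.inr (hk2' hp2)
        · left
          have h2n : ¬ 2 ∣ n := by
            intro h2
            have := Nat.minFac_le_of_dvd le_rfl h2
            have := hp.two_le
            omega
          refine ⟨hp.odd_of_ne_two hp2, hqprime.odd_of_ne_two ?_⟩
          intro hq2
          exact h2n (hq2 ▸ hqn)
      exact no_large_prime_aut hp hqprime hPcard hk2 hpltq hoddhyp _ hσ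
    have hNC : Subgroup.normalizer ((P : Subgroup G) : Set G) ≤
        Subgroup.centralizer ((P : Subgroup G) : Set G) := by
      rw [← Subgroup.subgroupOf_eq_top, ← Subgroup.normalizerMonoidHom_ker]
      rw [Subgroup.eq_top_iff']
      intro x
      rw [MonoidHom.mem_ker]
      have hmem : f x ∈ f.range := ⟨x, rfl⟩
      rw [Subgroup.card_eq_one.mp hR1] at hmem
      exact hmem
    have hcompl := MonoidHom.ker_transferSylow_isComplement' P hNC
    set K := (MonoidHom.transferSylow P hNC).ker with hKdef
    have hKcard : Nat.card K * Nat.card (P : Subgroup G) = n := hcompl.card_mul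
    have hKpos : 0 < Nat.card K := Nat.card_pos
    have hplt : 2 ≤ p ^ k := by
      calc 2 ≤ p := hp.two_le
      _ = p ^ 1 := (pow_one p).symm
      _ ≤ p ^ k := Nat.pow_le_pow_right hp.pos hk1
    have hKlt : Nat.card K ≤ N := by
      rw [hPcard] at hKcard
      nlinarith
    have hKdvd : Nat.card K ∣ n := Dvd.intro _ hKcard
    have hbK : HasGroupBasis K := ih K hKlt
      (fun hdvd => h4 (hdvd.trans hKdvd))
      (fun r hr hdvd => hcf r hr (hdvd.trans hKdvd))
    have hbP : HasGroupBasis (P : Subgroup G) := hasGroupBasis_of_card_dvd_prime_sq hp hPd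
    exact hasGroupBasis_of_isComplement' hcompl hbK hbP

/-- If `m` is an odd cube-free positive integer and `G` is a finite group of order `2m`,
then `G` has a basis. -/
theorem hasGroupBasis_of_card_two_mul_odd_cubeFree {G : Type*} [Group G] [Finite G]
    (m : ℕ) (hm : 0 < m) (hodd : Odd m) (hcf : ∀ p : ℕ, p.Prime → ¬ p ^ 3 ∣ m)
    (hcard : Nat.card G = 2 * m) :
    HasGroupBasis G := by
  apply hasGroupBasis_aux (Nat.card G) G le_rfl
  · rw [hcard]
    intro h
    obtain ⟨t, ht⟩ := h
    obtain ⟨s, hs⟩ := hodd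
    omega
  · intro r hr hdvd
    rw [hcard] at hdvd
    rcases eq_or_ne r 2 with rfl | hr2
    · obtain ⟨t, ht⟩ := hdvd
      obtain ⟨s, hs⟩ := hodd
      omega
    · have hco : (r ^ 3).Coprime 2 :=
        Nat.Coprime.pow_left _ ((Nat.coprime_primes hr Nat.prime_two).mpr hr2)
      exact hcf r hr (hco.dvd_of_dvd_mul_left hdvd)
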